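/- Exact values of the auxiliary variables at a KKT point: Let δ ∈ (0,1) and let (y,z) ∈ [0,1]^{3n−4} be a KKT point of the polynomial p constructed from the truncated-linear program. Then for every i ∈ {3,…,n}, writing S_i := Σ_{j<i} a_{ij} y_j + c_i, we have K z_i^+ = max{0, S_i − trunc(S_i)} and K z_i^− = max{0, trunc(S_i) − S_i}. -/

import Mathlib

noncomputable section

/-- Truncation to the unit interval. -/
def trunc (z : ℝ) : ℝ := min 1 (max 0 z)

/-- The term `q_i` of the quadratic polynomial, implementing the `i`-th gate. -/
def qval (K : ℝ) (a : ℕ → ℕ → ℝ) (c : ℕ → ℝ) (i : ℕ) (y zp zm : ℕ → ℝ) : ℝ :=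
  (y i + K * zp i - K * zm i - (∑ j ∈ Finset.Ico 1 i, a i j * y j) - c i) ^ 2
    + 2 * K ^ 2 * zp i * zm i + 2 * K * zp i * (1 - y i) + 2 * K * zm i * y i

/-- The quadratic polynomial `p(y,z) = δ^{n+1} y_n + Σ_{i=3}^n δ^i q_i(y,z)`. -/
def pval (n : ℕ) (K δ : ℝ) (a : ℕ → ℕ → ℝ) (c : ℕ → ℝ) (y zp zm : ℕ → ℝ) : ℝ :=
  δ ^ (n + 1) * y n + ∑ i ∈ Finset.Icc 3 n, δ ^ i * qval K a c i y zp zm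

/-- The partial derivative `∂p/∂y_k`. -/
def dpy (n : ℕ) (K δ : ℝ) (a : ℕ → ℕ → ℝ) (c : ℕ → ℝ) (k : ℕ) (y zp zm : ℕ → ℝ) : ℝ :=
  deriv (fun t => pval n K δ a c (Function.update y k t) zp zm) (y k)

/-- The partial derivative `∂p/∂z_k⁺`. -/
def dpzp (n : ℕ) (K δ : ℝ) (a : ℕ → ℕ → ℝ) (c : ℕ → ℝ) (k : ℕ) (y zp zm : ℕ → ℝ) : ℝ :=
  deriv (fun t => pval n K δ a c y (Function.update zp k t) zm) (zp k)

/-- The partial derivative `∂p/∂z_k⁻`. -/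
def dpzm (n : ℕ) (K δ : ℝ) (a : ℕ → ℕ → ℝ) (c : ℕ → ℝ) (k : ℕ) (y zp zm : ℕ → ℝ) : ℝ :=
  deriv (fun t => pval n K δ a c y zp (Function.update zm k t)) (zm k)

/-- `(y, z⁺, z⁻) ∈ [0,1]^{3n−4}` is a KKT point of the minimization of `p` over the box. -/
def IsKKT (n : ℕ) (K δ : ℝ) (a : ℕ → ℕ → ℝ) (c : ℕ → ℝ) (y zp zm : ℕ → ℝ) : Prop :=
  (∀ i, 1 ≤ i → i ≤ n → y i ∈ Set.Icc (0 : ℝ) 1) ∧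
  (∀ i, 3 ≤ i → i ≤ n → zp i ∈ Set.Icc (0 : ℝ) 1 ∧ zm i ∈ Set.Icc (0 : ℝ) 1) ∧
  (∀ i, 1 ≤ i → i ≤ n →
    (0 < y i → dpy n K δ a c i y zp zm ≤ 0) ∧ (y i < 1 → 0 ≤ dpy n K δ a c i y zp zm)) ∧
  (∀ i, 3 ≤ i → i ≤ n →
    ((0 < zp i → dpzp n K δ a c i y zp zm ≤ 0) ∧ (zp i < 1 → 0 ≤ dpzp n K δ a c i y zp zm)) ∧
    ((0 < zm i → dpzm n K δ a c i y zp zm ≤ 0) ∧ (zm i < 1 → 0 ≤ dpzm n K δ a c i y zp zm)))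

lemma dpzp_eq (n : ℕ) (K δ : ℝ) (a : ℕ → ℕ → ℝ) (c : ℕ → ℝ) (y zp zm : ℕ → ℝ)
    (i : ℕ) (hi : 3 ≤ i) (hin : i ≤ n) :
    dpzp n K δ a c i y zp zm
      = δ ^ i * (2 * K * (1 + K * zp i - ((∑ j ∈ Finset.Ico 1 i, a i j * y j) + c i))) := by
  set S := (∑ j ∈ Finset.Ico 1 i, a i j * y j) + c i with hSdef
  have hmem : i ∈ Finset.Icc 3 n := Finset.mem_Icc.2 ⟨hi, hin⟩
  have hfun : (fun t => pval n K δ a c y (Function.update zp i t) zm)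
      = fun t => (δ ^ (n + 1) * y n
            + ∑ k ∈ (Finset.Icc 3 n).erase i, δ ^ k * qval K a c k y zp zm)
        + δ ^ i * ((y i + K * t - K * zm i - S) ^ 2
            + (2 * K ^ 2 * zm i + 2 * K * (1 - y i)) * t + 2 * K * zm i * y i) := by
    funext t
    have hsplit : ∑ k ∈ Finset.Icc 3 n, δ ^ k * qval K a c k y (Function.update zp i t) zm
        = (∑ k ∈ (Finset.Icc 3 n).erase i,
              δ ^ k * qval K a c k y (Function.update zp i t) zm)
          + δ ^ i * qval K a c i y (Function.update zp i t) zm :=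
      (Finset.sum_erase_add _ _ hmem).symm
    have h1 : ∀ k ∈ (Finset.Icc 3 n).erase i,
        δ ^ k * qval K a c k y (Function.update zp i t) zm
          = δ ^ k * qval K a c k y zp zm := by
      intro k hk
      have hkne : k ≠ i := Finset.ne_of_mem_erase hk
      simp [qval, Function.update_of_ne hkne]
    have h2 : qval K a c i y (Function.update zp i t) zm
        = (y i + K * t - K * zm i - S) ^ 2
            + (2 * K ^ 2 * zm i + 2 * K * (1 - y i)) * t + 2 * K * zm i * y i := by
      simp only [qval, Function.update_self, hSdef]
      ring
    simp only [pval, hsplit, Finset.sum_congr rfl h1, h2]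
    ring
  rw [dpzp, hfun]
  have hlin : HasDerivAt (fun t : ℝ => y i + K * t - K * zm i - S) K (zp i) := by
    simpa using
      ((((hasDerivAt_id (zp i)).const_mul K).const_add (y i)).sub_const (K * zm i)).sub_const S
  have hsq := hlin.pow 2
  have hlin2 : HasDerivAt (fun t : ℝ => (2 * K ^ 2 * zm i + 2 * K * (1 - y i)) * t)
      (2 * K ^ 2 * zm i + 2 * K * (1 - y i)) (zp i) := by
    simpa using (hasDerivAt_id (zp i)).const_mul (2 * K ^ 2 * zm i + 2 * K * (1 - y i))
  have hd := ((hsq.add hlin2).add_const (2 * K * zm i * y i)).const_mul (δ ^ i)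
  have hd' := (hd.const_add (δ ^ (n + 1) * y n
      + ∑ k ∈ (Finset.Icc 3 n).erase i, δ ^ k * qval K a c k y zp zm)).deriv
  refine hd'.trans ?_
  push_cast
  ring

lemma dpzm_eq (n : ℕ) (K δ : ℝ) (a : ℕ → ℕ → ℝ) (c : ℕ → ℝ) (y zp zm : ℕ → ℝ)
    (i : ℕ) (hi : 3 ≤ i) (hin : i ≤ n) :
    dpzm n K δ a c i y zp zm
      = δ ^ i * (2 * K * (K * zm i + ((∑ j ∈ Finset.Ico 1 i, a i j * y j) + c i))) := by
  set S := (∑ j ∈ Finset.Ico 1 i, a i j * y j) + c i with hSdef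
  have hmem : i ∈ Finset.Icc 3 n := Finset.mem_Icc.2 ⟨hi, hin⟩
  have hfun : (fun t => pval n K δ a c y zp (Function.update zm i t))
      = fun t => (δ ^ (n + 1) * y n
            + ∑ k ∈ (Finset.Icc 3 n).erase i, δ ^ k * qval K a c k y zp zm)
        + δ ^ i * ((y i + K * zp i - S - K * t) ^ 2
            + (2 * K ^ 2 * zp i + 2 * K * y i) * t + 2 * K * zp i * (1 - y i)) := by
    funext t
    have hsplit : ∑ k ∈ Finset.Icc 3 n, δ ^ k * qval K a c k y zp (Function.update zm i t)
        = (∑ k ∈ (Finset.Icc 3 n).erase i,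
              δ ^ k * qval K a c k y zp (Function.update zm i t))
          + δ ^ i * qval K a c i y zp (Function.update zm i t) :=
      (Finset.sum_erase_add _ _ hmem).symm
    have h1 : ∀ k ∈ (Finset.Icc 3 n).erase i,
        δ ^ k * qval K a c k y zp (Function.update zm i t)
          = δ ^ k * qval K a c k y zp zm := by
      intro k hk
      have hkne : k ≠ i := Finset.ne_of_mem_erase hk
      simp [qval, Function.update_of_ne hkne]
    have h2 : qval K a c i y zp (Function.update zm i t)
        = (y i + K * zp i - S - K * t) ^ 2
            + (2 * K ^ 2 * zp i + 2 * K * y i) * t + 2 * K * zp i * (1 - y i) := by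
      simp only [qval, Function.update_self, hSdef]
      ring
    simp only [pval, hsplit, Finset.sum_congr rfl h1, h2]
    ring
  rw [dpzm, hfun]
  have hlin : HasDerivAt (fun t : ℝ => y i + K * zp i - S - K * t) (-K) (zm i) := by
    simpa using ((hasDerivAt_id (zm i)).const_mul K).const_sub (y i + K * zp i - S)
  have hsq := hlin.pow 2
  have hlin2 : HasDerivAt (fun t : ℝ => (2 * K ^ 2 * zp i + 2 * K * y i) * t)
      (2 * K ^ 2 * zp i + 2 * K * y i) (zm i) := by
    simpa using (hasDerivAt_id (zm i)).const_mul (2 * K ^ 2 * zp i + 2 * K * y i)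
  have hd := ((hsq.add hlin2).add_const (2 * K * zp i * (1 - y i))).const_mul (δ ^ i)
  have hd' := (hd.const_add (δ ^ (n + 1) * y n
      + ∑ k ∈ (Finset.Icc 3 n).erase i, δ ^ k * qval K a c k y zp zm)).deriv
  refine hd'.trans ?_
  push_cast
  ring

/-- Exact values of the auxiliary variables at a KKT point. -/
theorem kkt_aux_values (n : ℕ) (hn : 3 ≤ n) (a : ℕ → ℕ → ℝ) (c : ℕ → ℝ)
    (K : ℝ) (hK1 : 1 ≤ K)
    (hK : ∀ i, 3 ≤ i → i ≤ n → (∑ j ∈ Finset.Ico 1 i, |a i j|) + |c i| ≤ K)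
    (δ : ℝ) (hδ : δ ∈ Set.Ioo (0 : ℝ) 1)
    (y zp zm : ℕ → ℝ) (hkkt : IsKKT n K δ a c y zp zm) :
    ∀ i, 3 ≤ i → i ≤ n →
      K * zp i
          = max 0 (((∑ j ∈ Finset.Ico 1 i, a i j * y j) + c i)
              - trunc ((∑ j ∈ Finset.Ico 1 i, a i j * y j) + c i)) ∧
      K * zm i
          = max 0 (trunc ((∑ j ∈ Finset.Ico 1 i, a i j * y j) + c i)
              - ((∑ j ∈ Finset.Ico 1 i, a i j * y j) + c i)) := by
  obtain ⟨hy, hz, -, hzkkt⟩ := hkkt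
  intro i hi hin
  set S := (∑ j ∈ Finset.Ico 1 i, a i j * y j) + c i with hSdef
  have hK0 : (0 : ℝ) < K := lt_of_lt_of_le one_pos hK1
  have hδi : (0 : ℝ) < δ ^ i := pow_pos hδ.1 i
  -- |S| ≤ K
  have hyb : ∀ j ∈ Finset.Ico 1 i, |y j| ≤ 1 := by
    intro j hj
    obtain ⟨h1, h2⟩ := Finset.mem_Ico.1 hj
    have hmem := hy j h1 (le_of_lt (lt_of_lt_of_le h2 hin))
    exact abs_le.2 ⟨by linarith [hmem.1], hmem.2⟩
  have hsum : |∑ j ∈ Finset.Ico 1 i, a i j * y j| ≤ ∑ j ∈ Finset.Ico 1 i, |a i j| := by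
    calc |∑ j ∈ Finset.Ico 1 i, a i j * y j|
        ≤ ∑ j ∈ Finset.Ico 1 i, |a i j * y j| := Finset.abs_sum_le_sum_abs _ _
      _ ≤ ∑ j ∈ Finset.Ico 1 i, |a i j| := by
          refine Finset.sum_le_sum fun j hj => ?_
          rw [abs_mul]
          exact mul_le_of_le_one_right (abs_nonneg _) (hyb j hj)
  have hSbound : |S| ≤ K := by
    have h2 := hK i hi hin
    calc |S| ≤ |∑ j ∈ Finset.Ico 1 i, a i j * y j| + |c i| := abs_add_le _ _
      _ ≤ K := by linarith
  have hSK := abs_le.1 hSbound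
  obtain ⟨hup, hum⟩ := hz i hi hin
  obtain ⟨⟨hp1, hp2⟩, hm1, hm2⟩ := hzkkt i hi hin
  rw [dpzp_eq n K δ a c y zp zm i hi hin] at hp1 hp2
  rw [dpzm_eq n K δ a c y zp zm i hi hin] at hm1 hm2
  rw [← hSdef] at hp1 hp2 hm1 hm2
  -- sign extraction helpers
  have key1 : ∀ x : ℝ, δ ^ i * (2 * K * x) ≤ 0 → x ≤ 0 := by
    intro x hx
    by_contra h
    push_neg at h
    nlinarith [mul_pos (mul_pos hδi hK0) h]
  have key2 : ∀ x : ℝ, 0 ≤ δ ^ i * (2 * K * x) → 0 ≤ x := by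
    intro x hx
    by_contra h
    push_neg at h
    nlinarith [mul_pos (mul_pos hδi hK0) (neg_pos.2 h)]
  -- note: dpzp = δ^i * 2K * (1 + K zp i - S), dpzm = δ^i * 2K * (K zm i + S)
  have hA1 : 0 < zp i → 1 + K * zp i - S ≤ 0 := fun h => key1 _ (hp1 h)
  have hA2 : zp i < 1 → 0 ≤ 1 + K * zp i - S := fun h => key2 _ (hp2 h)
  have hB1 : 0 < zm i → K * zm i + S ≤ 0 := fun h => key1 _ (hm1 h)
  have hB2 : zm i < 1 → 0 ≤ K * zm i + S := fun h => key2 _ (hm2 h)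
  rcases lt_or_eq_of_le hup.1 with hupos | hu0
  · -- zp i > 0 : S > 1, K zp i = S - 1, zm i = 0
    have hA := hA1 hupos
    have hS1 : 1 < S := by nlinarith [mul_pos hK0 hupos]
    have hult : zp i < 1 := by
      have h1 : K * zp i < K * 1 := by linarith
      exact lt_of_mul_lt_mul_left h1 (le_of_lt hK0)
    have hA' := hA2 hult
    have hzpval : K * zp i = S - 1 := by linarith
    have hv0 : zm i = 0 := by
      by_contra h
      have hvpos : 0 < zm i := lt_of_le_of_ne hum.1 (Ne.symm h)
      have := hB1 hvpos
      nlinarith [mul_pos hK0 hvpos]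
    have htrunc : trunc S = 1 := by
      rw [trunc, max_eq_right (by linarith : (0:ℝ) ≤ S), min_eq_left (by linarith : (1:ℝ) ≤ S)]
    constructor
    · rw [htrunc, max_eq_right (by linarith : (0:ℝ) ≤ S - 1)]
      linarith
    · rw [hv0, mul_zero, htrunc, max_eq_left (by linarith : 1 - S ≤ (0:ℝ))]
  · -- zp i = 0
    rcases lt_or_eq_of_le hum.1 with hvpos | hv0
    · -- zm i > 0 : S < 0, K zm i = -S
      have hB := hB1 hvpos
      have hSneg : S < 0 := by nlinarith [mul_pos hK0 hvpos]
      have hzm : K * zm i = -S := by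
        rcases lt_or_eq_of_le hum.2 with h | h
        · linarith [hB2 h]
        · rw [h, mul_one] at hB ⊢; linarith [hSK.1]
      have htrunc : trunc S = 0 := by
        rw [trunc, max_eq_left (by linarith : S ≤ (0:ℝ)), min_eq_right (by norm_num : (0:ℝ) ≤ 1)]
      constructor
      · rw [← hu0, mul_zero, htrunc, max_eq_left (by linarith : S - 0 ≤ (0:ℝ))]
      · rw [htrunc, max_eq_right (by linarith : (0:ℝ) ≤ 0 - S)]
        linarith
    · -- zp i = 0, zm i = 0 : 0 ≤ S ≤ 1
      have hS1 : S ≤ 1 := by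
        have := hA2 (by rw [← hu0]; norm_num)
        rw [← hu0] at this; linarith
      have hS0 : 0 ≤ S := by
        have := hB2 (by rw [← hv0]; norm_num)
        rw [← hv0] at this; linarith
      have htrunc : trunc S = S := by
        rw [trunc, max_eq_right hS0, min_eq_right hS1]
      rw [← hu0, ← hv0, mul_zero, htrunc]
      constructor <;> simp

end
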